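/- Let the idealized posterior density be p_{u|y}(u) = Z^{-1} exp(-(1/2)‖y - G(u)‖_Γ²) q_u(u) with Z = ∫ exp(-(1/2)‖y - G(u)‖_Γ²) q_u(u) du, and let the marginal approximate posterior density be q_{u|y}(u) = Z̃^{-1} (∫_A exp(-(1/2)‖y - G^a(u)‖_Γ²) q_a(a) da) q_u(u) with Z̃ = ∫∫ exp(-(1/2)‖y - G^a(u)‖_Γ²) q_u(u) q_a(a) du da. If G is bounded, then there exist constants C > 0 and ε₀ > 0 (depending only on y, Γ and sup_u ‖G(u)‖, but not on ε or the family {G^a}) such that for every 0 < ε ≤ ε₀, if ‖G^a(u) - G(u)‖ < ε for (q_u ⊗ q_a)-almost every (u,a), then the total variation distance between the probability measures with densities q_{u|y} and p_{u|y} is at most Cε. -/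

import Mathlib

open MeasureTheory Matrix

/-- The squared weighted norm `‖x‖_Γ² = ‖Γ^{-1/2} x‖² = xᵀ Γ⁻¹ x` associated to a
positive definite covariance matrix `Γ`. -/
noncomputable def wSq {m : ℕ} (Γ : Matrix (Fin m) (Fin m) ℝ) (v : EuclideanSpace ℝ (Fin m)) : ℝ :=
  (fun i => v i) ⬝ᵥ Γ⁻¹.mulVec (fun i => v i)

/-- Total variation distance between two measures:
`d_TV(μ,ν) = sup_B |μ(B) - ν(B)|` over measurable sets `B`. -/
noncomputable def tvDist {X : Type*} [MeasurableSpace X] (μ ν : Measure X) : ℝ :=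
  ⨆ B : {B : Set X // MeasurableSet B}, |(μ (B : Set X)).toReal - (ν (B : Set X)).toReal|

/-! ### Auxiliary lemmas -/

lemma exp_neg_lip {s t : ℝ} (hs : 0 ≤ s) (ht : 0 ≤ t) :
    |Real.exp (-s) - Real.exp (-t)| ≤ |s - t| := by
  wlog h : s ≤ t generalizing s t
  · rw [abs_sub_comm, abs_sub_comm s t]; exact this ht hs (le_of_not_ge h)
  have e1 : Real.exp (-s) ≤ 1 := Real.exp_le_one_iff.2 (by linarith)
  have e2 : s - t + 1 ≤ Real.exp (s - t) := Real.add_one_le_exp _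
  have e3 : Real.exp (-s) - Real.exp (-t) = Real.exp (-s) * (1 - Real.exp (s - t)) := by
    rw [mul_sub, mul_one, ← Real.exp_add]; ring_nf
  have e4 : (0:ℝ) ≤ Real.exp (-s) := (Real.exp_pos _).le
  have e5 : Real.exp (-t) ≤ Real.exp (-s) := Real.exp_le_exp.2 (by linarith)
  rw [abs_of_nonneg (sub_nonneg.2 e5), abs_sub_comm, abs_of_nonneg (by linarith : (0:ℝ) ≤ t - s)]
  nlinarith

lemma coord_le_norm {m : ℕ} (v : EuclideanSpace ℝ (Fin m)) (i : Fin m) : |v i| ≤ ‖v‖ := by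
  rw [EuclideanSpace.norm_eq, ← Real.sqrt_sq_eq_abs]
  apply Real.sqrt_le_sqrt
  have := Finset.single_le_sum (f := fun j => ‖v j‖^2) (fun j _ => sq_nonneg _) (Finset.mem_univ i)
  simpa [Real.norm_eq_abs, sq_abs] using this

lemma dot_bound {m : ℕ} (Q : Matrix (Fin m) (Fin m) ℝ) (x v : EuclideanSpace ℝ (Fin m)) :
    |(fun i => x i) ⬝ᵥ Q.mulVec (fun i => v i)| ≤ (∑ i, ∑ j, |Q i j|) * (‖x‖ * ‖v‖) := by
  simp only [dotProduct, Matrix.mulVec, Finset.sum_mul]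
  refine (Finset.abs_sum_le_sum_abs _ _).trans (Finset.sum_le_sum fun i _ => ?_)
  rw [abs_mul]
  calc |x i| * |(fun j => Q i j) ⬝ᵥ fun j => v j|
      ≤ ‖x‖ * (∑ j, |Q i j| * ‖v‖) := by
        apply mul_le_mul (coord_le_norm x i) ?_ (abs_nonneg _) (norm_nonneg _)
        refine (Finset.abs_sum_le_sum_abs _ _).trans (Finset.sum_le_sum fun j _ => ?_)
        rw [abs_mul]
        exact mul_le_mul_of_nonneg_left (coord_le_norm v j) (abs_nonneg _)
    _ = ∑ j, |Q i j| * (‖x‖ * ‖v‖) := by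
        rw [Finset.mul_sum]; exact Finset.sum_congr rfl fun j _ => by ring

lemma wSq_nonneg {m : ℕ} {Γ : Matrix (Fin m) (Fin m) ℝ} (hΓ : Γ.PosDef)
    (v : EuclideanSpace ℝ (Fin m)) : 0 ≤ wSq Γ v := by
  have h := hΓ.inv.posSemidef.dotProduct_mulVec_nonneg (fun i => v i)
  simpa [wSq] using h

lemma wSq_diff {m : ℕ} (Γ : Matrix (Fin m) (Fin m) ℝ) (v w : EuclideanSpace ℝ (Fin m)) :
    |wSq Γ v - wSq Γ w| ≤ (∑ i, ∑ j, |Γ⁻¹ i j|) * (‖v - w‖ * (‖v‖ + ‖w‖)) := by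
  have hvw : ((fun i => v i) - (fun i => w i)) = (fun i => (v - w) i) := rfl
  have key : wSq Γ v - wSq Γ w =
      (fun i => (v - w) i) ⬝ᵥ Γ⁻¹.mulVec (fun i => v i)
      + (fun i => w i) ⬝ᵥ Γ⁻¹.mulVec (fun i => (v - w) i) := by
    rw [← hvw]
    simp only [wSq, sub_dotProduct, dotProduct_sub, Matrix.mulVec_sub]
    ring
  rw [key]
  have h1 := dot_bound Γ⁻¹ (v - w) v
  have h2 := dot_bound Γ⁻¹ w (v - w)
  calc |_ + _| ≤ _ := abs_add_le _ _
    _ ≤ (∑ i, ∑ j, |Γ⁻¹ i j|) * (‖v - w‖ * ‖v‖) + (∑ i, ∑ j, |Γ⁻¹ i j|) * (‖w‖ * ‖v - w‖) :=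
        add_le_add h1 h2
    _ = (∑ i, ∑ j, |Γ⁻¹ i j|) * (‖v - w‖ * (‖v‖ + ‖w‖)) := by ring

lemma wSq_le {m : ℕ} (Γ : Matrix (Fin m) (Fin m) ℝ) (v : EuclideanSpace ℝ (Fin m)) :
    wSq Γ v ≤ (∑ i, ∑ j, |Γ⁻¹ i j|) * (‖v‖ * ‖v‖) :=
  (le_abs_self _).trans (dot_bound Γ⁻¹ v v)

lemma wSq_cont {m : ℕ} (Γ : Matrix (Fin m) (Fin m) ℝ) : Continuous (wSq Γ) := by
  unfold wSq dotProduct Matrix.mulVec dotProduct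
  refine continuous_finset_sum _ fun i _ => Continuous.mul ?_
    (continuous_finset_sum _ fun j _ => Continuous.mul continuous_const ?_)
  · exact (EuclideanSpace.proj i).continuous
  · exact (EuclideanSpace.proj j).continuous

/-- The key total-variation estimate between two normalized densities. -/
lemma tv_aux {d : ℕ} (qu : EuclideanSpace ℝ (Fin d) → ℝ)
    (hqum : Measurable qu) (hqu0 : ∀ u, 0 ≤ qu u) (hqu1 : ∫ u, qu u = 1)
    (f g : EuclideanSpace ℝ (Fin d) → ℝ)
    (hfm : Measurable f) (hgm : Measurable g)
    (c Lc ε : ℝ) (hc0 : 0 < c) (hLc : 0 < Lc) (hε : 0 < ε) (hεc : Lc * ε ≤ c / 2)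
    (hfc : ∀ u, c ≤ f u) (hf1 : ∀ u, f u ≤ 1)
    (hg0 : ∀ u, 0 ≤ g u) (hg1 : ∀ u, g u ≤ 1)
    (hgf : ∀ᵐ u ∂(volume : Measure (EuclideanSpace ℝ (Fin d))),
      |g u - f u| * qu u ≤ Lc * ε * qu u) :
    tvDist
      (volume.withDensity fun u => ENNReal.ofReal (g u * qu u / ∫ u', g u' * qu u'))
      (volume.withDensity fun u => ENNReal.ofReal (f u * qu u / ∫ u', f u' * qu u'))
      ≤ (Lc * (2 / c + 2 / (c * c))) * ε := by
  have hqui : Integrable qu := by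
    by_contra h
    rw [integral_undef h] at hqu1
    exact one_ne_zero hqu1.symm
  have hf0 : ∀ u, 0 ≤ f u := fun u => hc0.le.trans (hfc u)
  have hfqi : Integrable (fun u => f u * qu u) := by
    refine hqui.mono' (hfm.mul hqum).aestronglyMeasurable (ae_of_all _ fun u => ?_)
    rw [Real.norm_eq_abs, abs_of_nonneg (mul_nonneg (hf0 u) (hqu0 u))]
    exact mul_le_of_le_one_left (hqu0 u) (hf1 u)
  have hgqi : Integrable (fun u => g u * qu u) := by
    refine hqui.mono' (hgm.mul hqum).aestronglyMeasurable (ae_of_all _ fun u => ?_)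
    rw [Real.norm_eq_abs, abs_of_nonneg (mul_nonneg (hg0 u) (hqu0 u))]
    exact mul_le_of_le_one_left (hqu0 u) (hg1 u)
  set Z := ∫ u, f u * qu u with hZdef
  set Z' := ∫ u, g u * qu u with hZ'def
  have hZc : c ≤ Z := by
    have : c = ∫ u, c * qu u := by rw [integral_const_mul, hqu1, mul_one]
    rw [this, hZdef]
    exact integral_mono (hqui.const_mul c) hfqi
      (fun u => mul_le_mul_of_nonneg_right (hfc u) (hqu0 u))
  have hZ1 : Z ≤ 1 := by
    rw [hZdef, ← hqu1]
    exact integral_mono hfqi hqui (fun u => mul_le_of_le_one_left (hqu0 u) (hf1 u))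
  have hZpos : 0 < Z := hc0.trans_le hZc
  have habs : ∀ᵐ u ∂(volume : Measure (EuclideanSpace ℝ (Fin d))),
      |g u * qu u - f u * qu u| ≤ Lc * ε * qu u := by
    filter_upwards [hgf] with u hu
    rwa [← sub_mul, abs_mul, abs_of_nonneg (hqu0 u)]
  have hdiff : |Z' - Z| ≤ Lc * ε := by
    rw [hZ'def, hZdef, ← integral_sub hgqi hfqi]
    calc |∫ u, (g u * qu u - f u * qu u)| ≤ ∫ u, |g u * qu u - f u * qu u| := by
          simpa using norm_integral_le_integral_norm (fun u => g u * qu u - f u * qu u)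
      _ ≤ ∫ u, Lc * ε * qu u :=
          integral_mono_ae (hgqi.sub hfqi).abs (hqui.const_mul _) habs
      _ = Lc * ε := by rw [integral_const_mul, hqu1, mul_one]
  have hZ'c : c / 2 ≤ Z' := by
    have := abs_le.1 hdiff
    linarith [this.1]
  have hZ'pos : 0 < Z' := by linarith
  have hpt : ∀ᵐ u ∂(volume : Measure (EuclideanSpace ℝ (Fin d))),
      |g u * qu u / Z' - f u * qu u / Z| ≤ (Lc * (2 / c + 2 / (c * c))) * ε * qu u := by
    filter_upwards [hgf] with u hu
    have hq0 := hqu0 u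
    have key : g u * qu u / Z' - f u * qu u / Z
        = (g u - f u) * qu u / Z' + (f u * qu u) * ((Z - Z') / (Z' * Z)) := by
      field_simp
      ring
    rw [key]
    have t1 : |(g u - f u) * qu u / Z'| ≤ (Lc * ε * qu u) / (c / 2) := by
      rw [abs_div, abs_of_pos hZ'pos, abs_mul, abs_of_nonneg hq0]
      exact div_le_div₀ (by positivity) hu (by linarith) hZ'c
    have t2 : |(f u * qu u) * ((Z - Z') / (Z' * Z))| ≤ qu u * ((Lc * ε) / ((c / 2) * c)) := by
      rw [abs_mul]
      have b1 : |f u * qu u| ≤ qu u := by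
        rw [abs_of_nonneg (mul_nonneg (hf0 u) hq0)]
        exact mul_le_of_le_one_left hq0 (hf1 u)
      have b2 : |(Z - Z') / (Z' * Z)| ≤ (Lc * ε) / ((c / 2) * c) := by
        rw [abs_div, abs_of_pos (mul_pos hZ'pos hZpos)]
        refine div_le_div₀ (by positivity) ?_ (by positivity) ?_
        · rw [abs_sub_comm]; exact hdiff
        · exact mul_le_mul hZ'c hZc hc0.le (by linarith)
      exact mul_le_mul b1 b2 (abs_nonneg _) hq0
    have heq : (Lc * ε * qu u) / (c / 2) + qu u * ((Lc * ε) / ((c / 2) * c))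
        = (Lc * (2 / c + 2 / (c * c))) * ε * qu u := by
      field_simp
    calc |(g u - f u) * qu u / Z' + (f u * qu u) * ((Z - Z') / (Z' * Z))|
        ≤ |(g u - f u) * qu u / Z'| + |(f u * qu u) * ((Z - Z') / (Z' * Z))| := abs_add_le _ _
      _ ≤ (Lc * ε * qu u) / (c / 2) + qu u * ((Lc * ε) / ((c / 2) * c)) := add_le_add t1 t2
      _ = (Lc * (2 / c + 2 / (c * c))) * ε * qu u := heq
  have hd1i : Integrable (fun u => g u * qu u / Z') := hgqi.div_const _
  have hd2i : Integrable (fun u => f u * qu u / Z) := hfqi.div_const _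
  refine ciSup_le ?_
  rintro ⟨B, hB⟩
  have m1 : ((volume.withDensity fun u => ENNReal.ofReal (g u * qu u / Z')) B).toReal
      = ∫ u in B, g u * qu u / Z' := by
    rw [withDensity_apply _ hB,
      ← ofReal_integral_eq_lintegral_ofReal hd1i.integrableOn
        (ae_of_all _ fun u => div_nonneg (mul_nonneg (hg0 u) (hqu0 u)) hZ'pos.le),
      ENNReal.toReal_ofReal]
    exact integral_nonneg fun u => div_nonneg (mul_nonneg (hg0 u) (hqu0 u)) hZ'pos.le
  have m2 : ((volume.withDensity fun u => ENNReal.ofReal (f u * qu u / Z)) B).toReal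
      = ∫ u in B, f u * qu u / Z := by
    rw [withDensity_apply _ hB,
      ← ofReal_integral_eq_lintegral_ofReal hd2i.integrableOn
        (ae_of_all _ fun u => div_nonneg (mul_nonneg (hf0 u) (hqu0 u)) hZpos.le),
      ENNReal.toReal_ofReal]
    exact integral_nonneg fun u => div_nonneg (mul_nonneg (hf0 u) (hqu0 u)) hZpos.le
  rw [m1, m2, ← integral_sub hd1i.integrableOn hd2i.integrableOn]
  have habs_int : Integrable (fun u => |g u * qu u / Z' - f u * qu u / Z|) :=
    (hd1i.sub hd2i).abs
  calc |∫ u in B, (g u * qu u / Z' - f u * qu u / Z)|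
      ≤ ∫ u in B, |g u * qu u / Z' - f u * qu u / Z| := by
        simpa using norm_integral_le_integral_norm (μ := volume.restrict B)
          (fun u => g u * qu u / Z' - f u * qu u / Z)
    _ ≤ ∫ u, |g u * qu u / Z' - f u * qu u / Z| :=
        setIntegral_le_integral habs_int (ae_of_all _ fun u => abs_nonneg _)
    _ ≤ ∫ u, (Lc * (2 / c + 2 / (c * c))) * ε * qu u :=
        integral_mono_ae habs_int (hqui.const_mul _) hpt
    _ = (Lc * (2 / c + 2 / (c * c))) * ε := by rw [integral_const_mul, hqu1, mul_one]

set_option maxHeartbeats 1600000 in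
theorem stmt0 {m d D : ℕ} (Γ : Matrix (Fin m) (Fin m) ℝ) (hΓ : Γ.PosDef)
    (y : EuclideanSpace ℝ (Fin m))
    (qu : EuclideanSpace ℝ (Fin d) → ℝ)
    (hqum : Measurable qu) (hqu0 : ∀ u, 0 ≤ qu u) (hqu1 : ∫ u, qu u = 1)
    (A : Set (EuclideanSpace ℝ (Fin D))) (hA : MeasurableSet A)
    (qa : EuclideanSpace ℝ (Fin D) → ℝ)
    (hqam : Measurable qa) (hqa0 : ∀ a, 0 ≤ qa a) (hqa1 : ∫ a in A, qa a = 1)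
    (G : EuclideanSpace ℝ (Fin d) → EuclideanSpace ℝ (Fin m)) (hG : Measurable G)
    (R : ℝ) (hGbd : ∀ u, ‖G u‖ ≤ R) :
    ∃ C > (0 : ℝ), ∃ ε₀ > (0 : ℝ),
      ∀ (Ga : EuclideanSpace ℝ (Fin D) → EuclideanSpace ℝ (Fin d) → EuclideanSpace ℝ (Fin m)),
        Measurable (fun p : EuclideanSpace ℝ (Fin d) × EuclideanSpace ℝ (Fin D) =>
          Ga p.2 p.1) →
      ∀ (ε : ℝ), 0 < ε → ε ≤ ε₀ →
        (∀ᵐ p ∂((volume.withDensity fun u => ENNReal.ofReal (qu u)).prod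
            ((volume.restrict A).withDensity fun a => ENNReal.ofReal (qa a))),
          ‖Ga p.2 p.1 - G p.1‖ < ε) →
        tvDist
          (volume.withDensity fun u => ENNReal.ofReal
            (((∫ a in A, Real.exp (-(1/2) * wSq Γ (y - Ga a u)) * qa a) * qu u) /
              (∫ u', (∫ a in A, Real.exp (-(1/2) * wSq Γ (y - Ga a u')) * qa a) * qu u')))
          (volume.withDensity fun u => ENNReal.ofReal
            ((Real.exp (-(1/2) * wSq Γ (y - G u)) * qu u) /
              (∫ u', Real.exp (-(1/2) * wSq Γ (y - G u')) * qu u')))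
          ≤ C * ε := by
  classical
  set M : ℝ := ∑ i, ∑ j, |Γ⁻¹ i j| with hMdef
  set K : ℝ := ‖y‖ + R + 1 with hKdef
  set Lc : ℝ := M * K + 1 with hLcdef
  set c : ℝ := Real.exp (-(1/2) * (M * (K * K))) with hcdef
  clear_value c Lc K M
  have hM : 0 ≤ M := by
    rw [hMdef]
    exact Finset.sum_nonneg fun i _ => Finset.sum_nonneg fun j _ => abs_nonneg _
  have hR : 0 ≤ R := (norm_nonneg _).trans (hGbd 0)
  have hK1 : 1 ≤ K := by rw [hKdef]; linarith [norm_nonneg y]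
  have hK0 : 0 < K := by linarith
  have hLc : 0 < Lc := by rw [hLcdef]; nlinarith
  have hc : 0 < c := by rw [hcdef]; exact Real.exp_pos _
  have hc1 : c ≤ 1 := by
    rw [hcdef]
    exact Real.exp_le_one_iff.2 (by nlinarith)
  have hCpos : 0 < Lc * (2 / c + 2 / (c * c)) :=
    mul_pos hLc (add_pos (div_pos two_pos hc) (div_pos two_pos (mul_pos hc hc)))
  have hLc2 : 0 < 2 * Lc := by linarith
  refine ⟨Lc * (2 / c + 2 / (c * c)), hCpos, min 1 (c / (2 * Lc)),
    lt_min one_pos (div_pos hc hLc2), ?_⟩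
  intro Ga hGa ε hε hεle hae
  have hε1 : ε ≤ 1 := hεle.trans (min_le_left _ _)
  have hεc : Lc * ε ≤ c / 2 := by
    have h1 : ε ≤ c / (2 * Lc) := hεle.trans (min_le_right _ _)
    rw [le_div_iff₀ hLc2] at h1
    nlinarith
  -- notation
  have hqai : IntegrableOn qa A := by
    by_contra h
    rw [integral_undef h] at hqa1
    exact one_ne_zero hqa1.symm

  have hwf : ∀ u, wSq Γ (y - G u) ≤ M * (K * K) := by
    intro u
    have h1 : ‖y - G u‖ ≤ K := by
      have h2 := norm_sub_le y (G u)
      have h3 := hGbd u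
      rw [hKdef]; linarith
    have h2 := wSq_le Γ (y - G u)
    have h3 : ‖y - G u‖ * ‖y - G u‖ ≤ K * K :=
      mul_self_le_mul_self (norm_nonneg _) h1
    nlinarith
  have hfc : ∀ u, c ≤ Real.exp (-(1/2) * wSq Γ (y - G u)) := by
    intro u
    rw [hcdef]
    exact Real.exp_le_exp.2 (by linarith [hwf u])
  have hf1 : ∀ u, Real.exp (-(1/2) * wSq Γ (y - G u)) ≤ 1 := fun u =>
    Real.exp_le_one_iff.2 (by nlinarith [wSq_nonneg hΓ (y - G u)])
  -- measurability
  have hfm : Measurable (fun u => Real.exp (-(1/2) * wSq Γ (y - G u))) :=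
    Real.measurable_exp.comp
      ((((wSq_cont Γ).measurable.comp (measurable_const.sub hG))).const_mul (-(1/2)))
  have hem : Measurable (fun p : EuclideanSpace ℝ (Fin d) × EuclideanSpace ℝ (Fin D) =>
      Real.exp (-(1/2) * wSq Γ (y - Ga p.2 p.1))) :=
    Real.measurable_exp.comp
      ((((wSq_cont Γ).measurable.comp (measurable_const.sub hGa))).const_mul (-(1/2)))
  have hgm : Measurable (fun u => ∫ a in A, Real.exp (-(1/2) * wSq Γ (y - Ga a u)) * qa a) :=
    (StronglyMeasurable.integral_prod_right'
      (hem.mul (hqam.comp measurable_snd)).stronglyMeasurable).measurable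
  -- integrability of inner integrand, and bounds on g
  have hgu_int : ∀ u, IntegrableOn
      (fun a => Real.exp (-(1/2) * wSq Γ (y - Ga a u)) * qa a) A := by
    intro u
    refine hqai.mono' ((hem.comp measurable_prodMk_left).mul hqam).aestronglyMeasurable
      (ae_of_all _ fun a => ?_)
    rw [Real.norm_eq_abs, abs_of_nonneg (mul_nonneg (Real.exp_pos _).le (hqa0 a))]
    exact mul_le_of_le_one_left (hqa0 a)
      (Real.exp_le_one_iff.2 (by nlinarith [wSq_nonneg hΓ (y - Ga a u)]))
  have hg0 : ∀ u, 0 ≤ ∫ a in A, Real.exp (-(1/2) * wSq Γ (y - Ga a u)) * qa a := fun u =>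
    integral_nonneg fun a => mul_nonneg (Real.exp_pos _).le (hqa0 a)
  have hg1 : ∀ u, (∫ a in A, Real.exp (-(1/2) * wSq Γ (y - Ga a u)) * qa a) ≤ 1 := by
    intro u
    calc (∫ a in A, Real.exp (-(1/2) * wSq Γ (y - Ga a u)) * qa a)
        ≤ ∫ a in A, qa a := integral_mono (hgu_int u) hqai fun a =>
          mul_le_of_le_one_left (hqa0 a)
            (Real.exp_le_one_iff.2 (by nlinarith [wSq_nonneg hΓ (y - Ga a u)]))
      _ = 1 := hqa1
  -- the a.e. closeness of g and f
  have hae' := Measure.ae_ae_of_ae_prod hae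
  have h2 := (ae_withDensity_iff (μ := volume) (hqum.ennreal_ofReal)).1 hae'
  have hgf : ∀ᵐ u ∂(volume : Measure (EuclideanSpace ℝ (Fin d))),
      |(∫ a in A, Real.exp (-(1/2) * wSq Γ (y - Ga a u)) * qa a)
        - Real.exp (-(1/2) * wSq Γ (y - G u))| * qu u ≤ Lc * ε * qu u := by
    filter_upwards [h2] with u hu
    by_cases hq : qu u = 0
    · simp [hq]
    · have hofr : ENNReal.ofReal (qu u) ≠ 0 := fun h =>
        hq (le_antisymm (ENNReal.ofReal_eq_zero.1 h) (hqu0 u))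
      have h3 := (ae_withDensity_iff (μ := volume.restrict A) hqam.ennreal_ofReal).1 (hu hofr)
      have key : |(∫ a in A, Real.exp (-(1/2) * wSq Γ (y - Ga a u)) * qa a)
          - Real.exp (-(1/2) * wSq Γ (y - G u))| ≤ Lc * ε := by
        have hfA : ∫ a in A, Real.exp (-(1/2) * wSq Γ (y - G u)) * qa a
            = Real.exp (-(1/2) * wSq Γ (y - G u)) := by
          rw [integral_const_mul, hqa1, mul_one]
        have heq : (fun a => (Real.exp (-(1/2) * wSq Γ (y - Ga a u))
            - Real.exp (-(1/2) * wSq Γ (y - G u))) * qa a)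
            = fun a => Real.exp (-(1/2) * wSq Γ (y - Ga a u)) * qa a
              - Real.exp (-(1/2) * wSq Γ (y - G u)) * qa a := by
          funext a; ring
        have hsubint : IntegrableOn (fun a => (Real.exp (-(1/2) * wSq Γ (y - Ga a u))
            - Real.exp (-(1/2) * wSq Γ (y - G u))) * qa a) A := by
          rw [IntegrableOn, heq]
          exact (hgu_int u).sub (hqai.const_mul _)
        have hsub : (∫ a in A, Real.exp (-(1/2) * wSq Γ (y - Ga a u)) * qa a)
            - Real.exp (-(1/2) * wSq Γ (y - G u))
            = ∫ a in A, (Real.exp (-(1/2) * wSq Γ (y - Ga a u))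
                - Real.exp (-(1/2) * wSq Γ (y - G u))) * qa a := by
          rw [heq, integral_sub (hgu_int u) (hqai.const_mul _), hfA]
        have haebd : ∀ᵐ a ∂(volume.restrict A),
            |(Real.exp (-(1/2) * wSq Γ (y - Ga a u))
              - Real.exp (-(1/2) * wSq Γ (y - G u))) * qa a| ≤ Lc * ε * qa a := by
          filter_upwards [h3] with a ha
          by_cases h0 : qa a = 0
          · simp [h0]
          · have hlt : ‖Ga a u - G u‖ < ε := ha (fun h =>
              h0 (le_antisymm (ENNReal.ofReal_eq_zero.1 h) (hqa0 a)))
            have hlip : |Real.exp (-(1/2) * wSq Γ (y - Ga a u))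
                - Real.exp (-(1/2) * wSq Γ (y - G u))| ≤ Lc * ε := by
              have hΔ : ‖(y - Ga a u) - (y - G u)‖ < ε := by
                rwa [sub_sub_sub_cancel_left, norm_sub_rev]
              have hv2 : ‖y - G u‖ ≤ K - 1 := by
                have h5 := norm_sub_le y (G u); have h6 := hGbd u
                rw [hKdef]; linarith
              have hv1 : ‖y - Ga a u‖ ≤ K := by
                have := norm_sub_le_norm_sub_add_norm_sub (y - Ga a u) (y - G u) 0
                have h4 : ‖y - Ga a u‖ ≤ ‖(y - Ga a u) - (y - G u)‖ + ‖y - G u‖ := by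
                  have := norm_sub_le ((y - Ga a u) - (y - G u)) (-(y - G u))
                  calc ‖y - Ga a u‖ = ‖((y - Ga a u) - (y - G u)) + (y - G u)‖ := by
                        rw [sub_add_cancel]
                    _ ≤ ‖(y - Ga a u) - (y - G u)‖ + ‖y - G u‖ := norm_add_le _ _
                linarith
              have hw1 : 0 ≤ (1/2) * wSq Γ (y - Ga a u) := by
                nlinarith [wSq_nonneg hΓ (y - Ga a u)]
              have hw2 : 0 ≤ (1/2) * wSq Γ (y - G u) := by
                nlinarith [wSq_nonneg hΓ (y - G u)]
              have hdd := wSq_diff Γ (y - Ga a u) (y - G u)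
              have hbd : |wSq Γ (y - Ga a u) - wSq Γ (y - G u)| ≤ M * (ε * (2 * K)) := by
                refine hdd.trans ?_
                rw [← hMdef]
                refine mul_le_mul_of_nonneg_left ?_ hM
                have hn1 : (0:ℝ) ≤ ‖(y - Ga a u) - (y - G u)‖ := norm_nonneg _
                nlinarith [norm_nonneg (y - Ga a u), norm_nonneg (y - G u)]
              calc |Real.exp (-(1/2) * wSq Γ (y - Ga a u))
                  - Real.exp (-(1/2) * wSq Γ (y - G u))|
                  = |Real.exp (-((1/2) * wSq Γ (y - Ga a u)))
                    - Real.exp (-((1/2) * wSq Γ (y - G u)))| := by rw [neg_mul, neg_mul]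
                _ ≤ |(1/2) * wSq Γ (y - Ga a u) - (1/2) * wSq Γ (y - G u)| :=
                    exp_neg_lip hw1 hw2
                _ = (1/2) * |wSq Γ (y - Ga a u) - wSq Γ (y - G u)| := by
                    rw [← mul_sub, abs_mul, abs_of_nonneg (by norm_num : (0:ℝ) ≤ (1/2:ℝ))]
                _ ≤ (1/2) * (M * (ε * (2 * K))) := by linarith [hbd]
                _ ≤ Lc * ε := by rw [hLcdef]; nlinarith
            rw [abs_mul, abs_of_nonneg (hqa0 a)]
            exact mul_le_mul_of_nonneg_right hlip (hqa0 a)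
        rw [hsub]
        calc |∫ a in A, (Real.exp (-(1/2) * wSq Γ (y - Ga a u))
              - Real.exp (-(1/2) * wSq Γ (y - G u))) * qa a|
            ≤ ∫ a in A, |(Real.exp (-(1/2) * wSq Γ (y - Ga a u))
              - Real.exp (-(1/2) * wSq Γ (y - G u))) * qa a| := by
              simpa [abs_mul] using norm_integral_le_integral_norm (μ := volume.restrict A)
                (fun a => (Real.exp (-(1/2) * wSq Γ (y - Ga a u))
                  - Real.exp (-(1/2) * wSq Γ (y - G u))) * qa a)
          _ ≤ ∫ a in A, Lc * ε * qa a :=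
              integral_mono_ae hsubint.abs (hqai.const_mul _) haebd
          _ = Lc * ε := by rw [integral_const_mul, hqa1, mul_one]
      exact mul_le_mul_of_nonneg_right key (hqu0 u)
  exact tv_aux qu hqum hqu0 hqu1
    (fun u => Real.exp (-(1/2) * wSq Γ (y - G u)))
    (fun u => ∫ a in A, Real.exp (-(1/2) * wSq Γ (y - Ga a u)) * qa a)
    hfm hgm c Lc ε hc hLc hε hεc hfc hf1 hg0 hg1 hgf
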